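/- arXiv:2104.12858 — 4 statements merged into one kernel-verified Lean document; each statement's English description precedes it below -/
import Mathlib

section
/- Let m ∈ ℝ and let Ω = ℂ ∖ (−∞, 0] be the cut plane with the principal branch of the square root. Then the function f(z) = e^{−iπ/4}·z^{−1/2}·exp(2m|z|) satisfies the massive holomorphicity equation ∂̄f + i·m·conj(f) = 0 on Ω, where ∂̄ = (∂_x + i∂_y)/2. -/
/-- The ∂̄ operator: `(∂_x h + i ∂_y h)/2` computed via the real Fréchet derivative. -/
noncomputable def dbar (h : ℂ → ℂ) (z : ℂ) : ℂ :=
  (fderiv ℝ h z 1 + Complex.I * fderiv ℝ h z Complex.I) / 2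


theorem branching_kernel_satisfies_dirac (m : ℝ) :
    ∀ z ∈ Complex.slitPlane,
      dbar (fun w => Complex.exp (-Complex.I * (Real.pi / 4)) * w ^ (-(1 / 2) : ℂ)
          * Complex.exp (2 * (m : ℂ) * ‖w‖)) z
        + Complex.I * m * (starRingEnd ℂ)
            (Complex.exp (-Complex.I * (Real.pi / 4)) * z ^ (-(1 / 2) : ℂ)
              * Complex.exp (2 * (m : ℂ) * ‖z‖)) = 0 := by
  intro z hz
  have hz0 : z ≠ 0 := Complex.slitPlane_ne_zero hz
  have hs0 : z.re * z.re + z.im * z.im ≠ 0 := by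
    have := Complex.normSq_pos.mpr hz0
    rw [Complex.normSq_apply] at this
    exact ne_of_gt this
  set c : ℂ := Complex.exp (-Complex.I * (Real.pi / 4)) with hc
  -- derivatives
  have hre : HasFDerivAt (fun w : ℂ => w.re) (Complex.reCLM : ℂ →L[ℝ] ℝ) z :=
    Complex.reCLM.hasFDerivAt
  have him : HasFDerivAt (fun w : ℂ => w.im) (Complex.imCLM : ℂ →L[ℝ] ℝ) z :=
    Complex.imCLM.hasFDerivAt
  have hnsq : HasFDerivAt (fun w : ℂ => w.re * w.re + w.im * w.im)
      ((z.re • (Complex.reCLM : ℂ →L[ℝ] ℝ) + z.re • (Complex.reCLM : ℂ →L[ℝ] ℝ))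
        + (z.im • (Complex.imCLM : ℂ →L[ℝ] ℝ) + z.im • (Complex.imCLM : ℂ →L[ℝ] ℝ))) z :=
    (hre.mul hre).add (him.mul him)
  have habs : HasFDerivAt (fun w : ℂ => Real.sqrt (w.re * w.re + w.im * w.im))
      ((1 / (2 * Real.sqrt (z.re * z.re + z.im * z.im))) •
        ((z.re • (Complex.reCLM : ℂ →L[ℝ] ℝ) + z.re • (Complex.reCLM : ℂ →L[ℝ] ℝ))
        + (z.im • (Complex.imCLM : ℂ →L[ℝ] ℝ) + z.im • (Complex.imCLM : ℂ →L[ℝ] ℝ)))) z :=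
    hnsq.sqrt hs0
  have hofA := (Complex.ofRealCLM.hasFDerivAt (x := Real.sqrt (z.re*z.re+z.im*z.im))).comp z habs
  have hφ := hofA.const_mul (2 * (m : ℂ))
  have hE := (Complex.hasDerivAt_exp _).comp_hasFDerivAt z hφ
  have hg : HasDerivAt (fun w : ℂ => c * w ^ (-(1/2) : ℂ))
      (c * ((-(1/2) : ℂ) * z ^ ((-(1/2) : ℂ) - 1))) z :=
    ((Complex.hasStrictDerivAt_cpow_const hz).hasDerivAt).const_mul c
  have hgR := hg.hasFDerivAt.restrictScalars ℝ
  have hF := hgR.mul hE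
  have habs_eq : ∀ w : ℂ, (‖w‖ : ℝ) = Real.sqrt (w.re * w.re + w.im * w.im) := by
    intro w; rw [Complex.norm_def, Complex.normSq_apply]
  simp only [Function.comp_def, Complex.ofRealCLM_apply, Pi.mul_def] at hF
  simp only [habs_eq]
  rw [dbar, hF.fderiv]
  simp only [ContinuousLinearMap.add_apply, ContinuousLinearMap.coe_smul', Pi.smul_apply,
    ContinuousLinearMap.coe_comp', Function.comp_apply, ContinuousLinearMap.coe_restrictScalars',
    ContinuousLinearMap.smulRight_apply, ContinuousLinearMap.one_apply,
    ContinuousLinearMap.toSpanSingleton_apply,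
    Complex.coe_smul, smul_eq_mul, Complex.reCLM_apply, Complex.imCLM_apply,
    Complex.ofRealCLM_apply, Complex.one_re, Complex.one_im, Complex.I_re, Complex.I_im]
  rw [show Real.sqrt (z.re*z.re+z.im*z.im) = ‖z‖ from (habs_eq z).symm]
  set S : ℝ := ‖z‖ with hSdef
  have hS0 : S ≠ 0 := by
    simpa [hSdef] using (norm_ne_zero_iff.mpr hz0)
  have hu2 : z ^ ((1:ℂ)/2) * z ^ ((1:ℂ)/2) = z := by
    rw [← Complex.cpow_add _ _ hz0]
    norm_num
  set u : ℂ := z ^ ((1:ℂ)/2) with hudef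
  have hu0 : u ≠ 0 := fun h => hz0 (by rw [← hu2, h, zero_mul])
  have hneg : z ^ (-(1/2) : ℂ) = u⁻¹ := by
    rw [hudef, ← Complex.cpow_neg]
  have habsu : Complex.normSq u = S := by
    rw [Complex.normSq_eq_norm_sq, sq, ← norm_mul, hu2, hSdef]
  have hcu : (starRingEnd ℂ) u = (S : ℂ) / u := by
    rw [eq_div_iff hu0, mul_comm, Complex.mul_conj, habsu]
  have hEc : (starRingEnd ℂ) (Complex.exp (2 * (m:ℂ) * (S:ℂ))) = Complex.exp (2 * (m:ℂ) * (S:ℂ)) := by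
    have h : (starRingEnd ℂ) (2 * (m:ℂ) * (S:ℂ)) = 2 * (m:ℂ) * (S:ℂ) := by
      rw [map_mul, map_mul, Complex.conj_ofReal, Complex.conj_ofReal, map_ofNat]
    rw [← Complex.exp_conj, h]
  set e : ℂ := Complex.exp (Complex.I * (Real.pi/4)) with hedef
  have he0 : e ≠ 0 := Complex.exp_ne_zero _
  have he2 : e * e = Complex.I := by
    rw [hedef, ← Complex.exp_add,
      show Complex.I * (Real.pi/4) + Complex.I * (Real.pi/4) = ((Real.pi/2 : ℝ):ℂ) * Complex.I by
        push_cast; ring,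
      Complex.exp_mul_I, ← Complex.ofReal_cos, ← Complex.ofReal_sin,
      Real.cos_pi_div_two, Real.sin_pi_div_two]
    simp
  have hcc : (starRingEnd ℂ) c = e := by
    have h : (starRingEnd ℂ) (-Complex.I * ((Real.pi : ℂ) / 4)) = Complex.I * ((Real.pi : ℂ) / 4) := by
      rw [map_mul, map_neg, Complex.conj_I, map_div₀, Complex.conj_ofReal, map_ofNat]
      ring
    rw [hc, hedef, ← Complex.exp_conj, h]
  have hc2 : c = -Complex.I * e := by
    have hce : c * e = 1 := by
      rw [hc, hedef, ← Complex.exp_add,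
        show -Complex.I*(Real.pi/4 : ℂ) + Complex.I*(Real.pi/4 : ℂ) = 0 by ring,
        Complex.exp_zero]
    have h2 : (-Complex.I * e) * e = 1 := by
      rw [mul_assoc, he2]
      simp [Complex.I_mul_I]
    exact mul_right_cancel₀ he0 (hce.trans h2.symm)
  have hneg2 : z ^ ((-(1/2) : ℂ) - 1) = u⁻¹ * z⁻¹ := by
    rw [sub_eq_add_neg, Complex.cpow_add _ _ hz0, hneg, Complex.cpow_neg_one]
  have hce : (starRingEnd ℂ) e = -Complex.I * e := by
    rw [← hcc, Complex.conj_conj, hcc]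
    exact hc2
  have hci : (starRingEnd ℂ) (-Complex.I) = Complex.I := by
    rw [map_neg, Complex.conj_I, neg_neg]
  rw [hneg, hneg2, hc2]
  simp only [map_mul, map_inv₀, hcu, hEc, hce, hci]
  push_cast
  obtain ⟨a, ha⟩ : ∃ a : ℂ, ((z.re : ℝ) : ℂ) = a := ⟨_, rfl⟩
  obtain ⟨b, hb⟩ : ∃ b : ℂ, ((z.im : ℝ) : ℂ) = b := ⟨_, rfl⟩
  have hab : a + b * Complex.I = z := by rw [← ha, ← hb]; exact Complex.re_add_im z
  rw [ha, hb, ← hu2]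
  rw [show a = u * u - b * Complex.I from by rw [← hu2] at hab; linear_combination hab]
  field_simp [hu0, hS0, he0, Complex.exp_ne_zero]
  have hSc : ((S : ℝ) : ℂ) ≠ 0 := Complex.ofReal_ne_zero.mpr hS0
  have hD : (u * (2 * ((S:ℝ):ℂ)) * (2 * (u * (u * u))) * 2) ≠ 0 :=
    mul_ne_zero (mul_ne_zero (mul_ne_zero hu0 (mul_ne_zero two_ne_zero hSc))
      (mul_ne_zero two_ne_zero (mul_ne_zero hu0 (mul_ne_zero hu0 hu0)))) two_ne_zero
  linear_combination (Complex.I * (e * ((S:ℝ):ℂ) * Complex.exp (2*(m:ℂ)*((S:ℝ):ℂ))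
    - 4 * e * (m:ℂ) * Complex.exp (2*(m:ℂ)*((S:ℝ):ℂ)) * u^4)) * Complex.I_mul_I
end

section
/- Let U ⊆ ℂ be open, m ∈ ℝ, and let f : U → ℂ be continuously differentiable with ∂̄f + i·m·conj(f) = 0 on U, where ∂̄ = (∂_x + i∂_y)/2. Then ∂_x(Re(f²)) = ∂_y(Im(f²)) on U; equivalently, the real 1-form Im(f²)dx + Re(f²)dy (i.e. Im[f(z)²dz]) is closed. -/
theorem massive_form_closed (U : Set ℂ) (hU : IsOpen U) (m : ℝ) (f : ℂ → ℂ)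
    (hf : ContDiffOn ℝ 1 f U)
    (hdirac : ∀ z ∈ U, dbar f z + Complex.I * m * (starRingEnd ℂ) (f z) = 0) :
    ∀ z ∈ U,
      fderiv ℝ (fun w => ((f w) ^ 2).re) z 1
        = fderiv ℝ (fun w => ((f w) ^ 2).im) z Complex.I := by
  intro z hz
  have hd : HasFDerivAt f (fderiv ℝ f z) z :=
    ((hf.contDiffAt (hU.mem_nhds hz)).differentiableAt one_ne_zero).hasFDerivAt
  set D := fderiv ℝ f z with hD
  have hsq : HasFDerivAt (fun w => (f w) ^ 2) (f z • D + f z • D) z := by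
    rw [show (fun w => (f w) ^ 2) = f * f from funext fun w => pow_two (f w)]
    exact hd.mul hd
  have hre : HasFDerivAt (fun w => ((f w) ^ 2).re)
      ((Complex.reCLM : ℂ →L[ℝ] ℝ).comp (f z • D + f z • D)) z :=
    Complex.reCLM.hasFDerivAt.comp z hsq
  have him : HasFDerivAt (fun w => ((f w) ^ 2).im)
      ((Complex.imCLM : ℂ →L[ℝ] ℝ).comp (f z • D + f z • D)) z :=
    Complex.imCLM.hasFDerivAt.comp z hsq
  rw [hre.fderiv, him.fderiv]
  have h1 : D 1 + Complex.I * D Complex.I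
      = -(2 * Complex.I * m * (starRingEnd ℂ) (f z)) := by
    have h := hdirac z hz
    simp only [dbar, ← hD] at h
    linear_combination 2 * h
  have key : (f z * D 1 + f z * D 1)
      + Complex.I * (f z * D Complex.I + f z * D Complex.I)
      = -(4 * Complex.I * m * (Complex.normSq (f z) : ℂ)) := by
    have hmc : f z * (starRingEnd ℂ) (f z) = (Complex.normSq (f z) : ℂ) :=
      Complex.mul_conj (f z)
    linear_combination 2 * (f z) * h1 - 4 * Complex.I * (m : ℂ) * hmc
  have hre0 : ((f z * D 1 + f z * D 1)
      + Complex.I * (f z * D Complex.I + f z * D Complex.I)).re = 0 := by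
    rw [key]; simp
  simp only [ContinuousLinearMap.comp_apply, ContinuousLinearMap.add_apply,
    ContinuousLinearMap.smul_apply, Complex.reCLM_apply, Complex.imCLM_apply,
    smul_eq_mul]
  have := hre0
  rw [Complex.add_re, Complex.mul_re] at this
  simp only [Complex.I_re, Complex.I_im] at this
  linarith
end

section
/- Let U ⊆ ℂ be open, m ∈ ℝ, let f : U → ℂ be continuously differentiable with ∂̄f + i·m·conj(f) = 0, and let h : U → ℝ be twice continuously differentiable with ∂_x h = Im(f²) and ∂_y h = Re(f²). Then Δh = −4m·|f|² on U. In particular h is subharmonic whenever m ≤ 0. -/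
theorem laplacian_of_primitive (U : Set ℂ) (hU : IsOpen U) (m : ℝ) (f : ℂ → ℂ) (h : ℂ → ℝ)
    (hf : ContDiffOn ℝ 1 f U) (hh : ContDiffOn ℝ 2 h U)
    (hdirac : ∀ z ∈ U, dbar f z + Complex.I * m * (starRingEnd ℂ) (f z) = 0)
    (hx : ∀ z ∈ U, fderiv ℝ h z 1 = ((f z) ^ 2).im)
    (hy : ∀ z ∈ U, fderiv ℝ h z Complex.I = ((f z) ^ 2).re) :
    (∀ z ∈ U,
        fderiv ℝ (fun w => fderiv ℝ h w 1) z 1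
          + fderiv ℝ (fun w => fderiv ℝ h w Complex.I) z Complex.I
          = -4 * m * ‖f z‖ ^ 2) ∧
    (m ≤ 0 → ∀ z ∈ U,
        0 ≤ fderiv ℝ (fun w => fderiv ℝ h w 1) z 1
          + fderiv ℝ (fun w => fderiv ℝ h w Complex.I) z Complex.I) := by
  have key : ∀ z ∈ U,
      fderiv ℝ (fun w => fderiv ℝ h w 1) z 1
        + fderiv ℝ (fun w => fderiv ℝ h w Complex.I) z Complex.I
        = -4 * m * ‖f z‖ ^ 2 := by
    intro z hz
    have hzU : U ∈ nhds z := hU.mem_nhds hz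
    have hfd : DifferentiableAt ℝ f z :=
      (hf.contDiffAt hzU).differentiableAt one_ne_zero
    have hgd : DifferentiableAt ℝ (fun w => (f w) ^ 2) z := by
      simpa [sq, Pi.mul_def] using hfd.mul hfd
    -- derivative of the square
    have hDg : fderiv ℝ (fun w => (f w) ^ 2) z
        = f z • fderiv ℝ f z + f z • fderiv ℝ f z := by
      simpa [sq, Pi.mul_def] using fderiv_mul hfd hfd
    set D1 : ℂ := fderiv ℝ f z 1 with hD1
    set DI : ℂ := fderiv ℝ f z Complex.I with hDI
    have hDg1 : fderiv ℝ (fun w => (f w) ^ 2) z 1 = 2 * f z * D1 := by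
      rw [hDg]; simp; ring
    have hDgI : fderiv ℝ (fun w => (f w) ^ 2) z Complex.I = 2 * f z * DI := by
      rw [hDg]; simp; ring
    -- derivatives of the real/imaginary parts of the square
    have him : HasFDerivAt (fun w => ((f w) ^ 2).im)
        (Complex.imCLM.comp (fderiv ℝ (fun w => (f w) ^ 2) z)) z :=
      Complex.imCLM.hasFDerivAt.comp z hgd.hasFDerivAt
    have hre : HasFDerivAt (fun w => ((f w) ^ 2).re)
        (Complex.reCLM.comp (fderiv ℝ (fun w => (f w) ^ 2) z)) z :=
      Complex.reCLM.hasFDerivAt.comp z hgd.hasFDerivAt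
    -- replace the second derivatives of h by derivatives of im/re of f²
    have e1 : (fun w => fderiv ℝ h w 1) =ᶠ[nhds z] (fun w => ((f w) ^ 2).im) :=
      Filter.eventuallyEq_of_mem hzU (fun w hw => hx w hw)
    have e2 : (fun w => fderiv ℝ h w Complex.I) =ᶠ[nhds z] (fun w => ((f w) ^ 2).re) :=
      Filter.eventuallyEq_of_mem hzU (fun w hw => hy w hw)
    have E1 : fderiv ℝ (fun w => fderiv ℝ h w 1) z 1 = (2 * f z * D1).im := by
      rw [e1.fderiv_eq, him.fderiv]
      simp [hDg1]
    have E2 : fderiv ℝ (fun w => fderiv ℝ h w Complex.I) z Complex.I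
        = (2 * f z * DI).re := by
      rw [e2.fderiv_eq, hre.fderiv]
      simp [hDgI]
    -- the Dirac equation
    have heq : D1 + Complex.I * DI = -2 * Complex.I * m * (starRingEnd ℂ) (f z) := by
      have := hdirac z hz
      unfold dbar at this
      rw [← hD1, ← hDI] at this
      have h2 : (D1 + Complex.I * DI) / 2 = -(Complex.I * m * (starRingEnd ℂ) (f z)) := by
        linear_combination this
      field_simp at h2
      linear_combination h2
    have hD1eq : D1 = -2 * Complex.I * m * (starRingEnd ℂ) (f z) - Complex.I * DI := by
      linear_combination heq
    rw [E1, E2, hD1eq, Complex.sq_norm, Complex.normSq_apply]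
    simp [Complex.mul_im, Complex.mul_re, Complex.conj_re, Complex.conj_im]
    ring
  refine ⟨key, fun hm z hz => ?_⟩
  rw [key z hz]
  have := sq_nonneg (‖f z‖)
  nlinarith
end

section
/- Let m > 0 and, for x > 0, set K₀(x) := ∫_0^∞ e^{−x·cosh t} dt and K₁(x) := ∫_0^∞ e^{−x·cosh t}·cosh t dt. Then the function f : ℂ ∖ {0} → ℂ defined by f(z) = (conj(z)/|z|)·K₁(2m|z|) + i·K₀(2m|z|) satisfies the massive holomorphicity equation ∂̄f + i·m·conj(f) = 0 on ℂ ∖ {0}, where ∂̄ = (∂_x + i∂_y)/2. -/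
open MeasureTheory

open Set Filter Topology

/-- Modified Bessel function of the second kind of order 0. -/
noncomputable def K₀ (x : ℝ) : ℝ := ∫ t in Set.Ioi (0 : ℝ), Real.exp (-x * Real.cosh t)

/-- Modified Bessel function of the second kind of order 1. -/
noncomputable def K₁ (x : ℝ) : ℝ :=
  ∫ t in Set.Ioi (0 : ℝ), Real.exp (-x * Real.cosh t) * Real.cosh t

noncomputable def Jb (n : ℕ) (x : ℝ) : ℝ :=
  ∫ t in Set.Ioi (0:ℝ), Real.exp (-x * Real.cosh t) * Real.cosh t ^ n

lemma pow_le_factorial_mul_exp {u : ℝ} (hu : 0 ≤ u) (n : ℕ) :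
    u ^ n ≤ (n.factorial : ℝ) * Real.exp u := by
  have h := Real.sum_le_exp_of_nonneg hu (n+1)
  have h2 : u ^ n / n.factorial ≤ ∑ i ∈ Finset.range (n+1), u ^ i / i.factorial :=
    Finset.single_le_sum (f := fun i => u ^ i / i.factorial)
      (fun i _ => by positivity) (Finset.self_mem_range_succ n)
  have h3 := h2.trans h
  rw [div_le_iff₀ (by positivity : (0:ℝ) < n.factorial)] at h3
  linarith

lemma self_le_cosh {t : ℝ} (ht : 0 ≤ t) : t ≤ Real.cosh t := by
  rcases eq_or_lt_of_le ht with h | h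
  · simp [← h, Real.cosh_zero]
  · exact le_of_lt ((Real.self_lt_sinh_iff.mpr h).trans (Real.sinh_lt_cosh t))

lemma cosh_bound (n : ℕ) {c t : ℝ} (hc : 0 < c) (ht : 0 ≤ t) :
    Real.exp (-c * Real.cosh t) * Real.cosh t ^ n
      ≤ ((n.factorial : ℝ) * (2/c)^n) * Real.exp (-(c/2) * t) := by
  have hch : (0:ℝ) < Real.cosh t := Real.cosh_pos t
  have h1 : (c/2 * Real.cosh t)^n ≤ (n.factorial : ℝ) * Real.exp (c/2 * Real.cosh t) :=
    pow_le_factorial_mul_exp (by positivity) n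
  have h2 : Real.cosh t ^ n ≤ (2/c)^n * ((n.factorial : ℝ) * Real.exp (c/2 * Real.cosh t)) := by
    have : Real.cosh t ^ n = (2/c)^n * (c/2 * Real.cosh t)^n := by
      rw [mul_pow, ← mul_assoc, ← mul_pow]
      field_simp
      rw [one_pow]
    rw [this]
    exact mul_le_mul_of_nonneg_left h1 (by positivity)
  calc Real.exp (-c * Real.cosh t) * Real.cosh t ^ n
      ≤ Real.exp (-c * Real.cosh t) * ((2/c)^n * ((n.factorial : ℝ) * Real.exp (c/2 * Real.cosh t))) :=
        mul_le_mul_of_nonneg_left h2 (Real.exp_nonneg _)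
    _ = ((n.factorial : ℝ) * (2/c)^n) * Real.exp (-(c/2) * Real.cosh t) := by
        have he : Real.exp (-c * Real.cosh t) * Real.exp (c/2 * Real.cosh t)
            = Real.exp (-(c/2) * Real.cosh t) := by
          rw [← Real.exp_add]; ring_nf
        rw [← he]; ring
    _ ≤ ((n.factorial : ℝ) * (2/c)^n) * Real.exp (-(c/2) * t) := by
        apply mul_le_mul_of_nonneg_left _ (by positivity)
        apply Real.exp_le_exp.mpr
        have := self_le_cosh ht
        nlinarith

lemma integrable_Jb (n : ℕ) {c : ℝ} (hc : 0 < c) :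
    IntegrableOn (fun t => Real.exp (-c * Real.cosh t) * Real.cosh t ^ n) (Set.Ioi (0:ℝ)) := by
  have hcont : Continuous fun t : ℝ => Real.exp (-c * Real.cosh t) * Real.cosh t ^ n := by
    fun_prop
  refine Integrable.mono'
    (g := fun t => ((n.factorial : ℝ) * (2/c)^n) * Real.exp (-(c/2) * t)) ?_ hcont.aestronglyMeasurable ?_
  · exact (exp_neg_integrableOn_Ioi 0 (by positivity : (0:ℝ) < c/2)).const_mul _
  · filter_upwards [ae_restrict_mem measurableSet_Ioi] with t ht
    rw [Real.norm_eq_abs, abs_of_nonneg (by positivity)]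
    exact cosh_bound n hc (le_of_lt ht)

-- assume previous lemmas

lemma hasDerivAt_Jb (n : ℕ) {x : ℝ} (hx : 0 < x) :
    HasDerivAt (Jb n) (-(Jb (n+1) x)) x := by
  have hx2 : (0:ℝ) < x/2 := by positivity
  have key := hasDerivAt_integral_of_dominated_loc_of_deriv_le (μ := volume.restrict (Ioi 0))
    (F := fun y t => Real.exp (-y * Real.cosh t) * Real.cosh t ^ n)
    (F' := fun y t => -(Real.exp (-y * Real.cosh t) * Real.cosh t ^ (n+1)))
    (x₀ := x) (s := Metric.ball x (x/2))
    (bound := fun t => (((n+1).factorial : ℝ) * (2/(x/2))^(n+1)) * Real.exp (-(x/2/2) * t))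
    (Metric.ball_mem_nhds x hx2)
    (Eventually.of_forall fun y =>
      (Continuous.aestronglyMeasurable (by fun_prop)))
    ((integrable_Jb n hx))
    (Continuous.aestronglyMeasurable (by fun_prop))
    ?_ ?_ ?_
  · have h2 := key.2
    have : HasDerivAt (fun y => ∫ t in Ioi (0:ℝ), Real.exp (-y * Real.cosh t) * Real.cosh t ^ n)
        (∫ t in Ioi (0:ℝ), -(Real.exp (-x * Real.cosh t) * Real.cosh t ^ (n+1))) x := h2
    rw [integral_neg] at this
    exact this
  · filter_upwards [ae_restrict_mem measurableSet_Ioi] with t ht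
    intro y hy
    have hyl : x/2 < y := by
      have h := mem_ball_iff_norm.mp hy
      rw [Real.norm_eq_abs] at h
      have := abs_lt.mp h
      linarith [this.1]
    rw [norm_neg, Real.norm_eq_abs, abs_of_nonneg (by positivity)]
    calc Real.exp (-y * Real.cosh t) * Real.cosh t ^ (n+1)
        ≤ Real.exp (-(x/2) * Real.cosh t) * Real.cosh t ^ (n+1) := by
          apply mul_le_mul_of_nonneg_right _ (by positivity)
          apply Real.exp_le_exp.mpr
          have hch : (0:ℝ) < Real.cosh t := Real.cosh_pos t
          nlinarith
      _ ≤ (((n+1).factorial : ℝ) * (2/(x/2))^(n+1)) * Real.exp (-(x/2/2) * t) :=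
          cosh_bound (n+1) hx2 (le_of_lt ht)
  · exact (exp_neg_integrableOn_Ioi 0 (by positivity : (0:ℝ) < x/2/2)).const_mul _
  · filter_upwards [ae_restrict_mem measurableSet_Ioi] with t ht
    intro y hy
    have h : HasDerivAt (fun y : ℝ => -y * Real.cosh t) (-Real.cosh t) y := by
      simpa using ((hasDerivAt_id y).neg.mul_const (Real.cosh t))
    have := (h.exp).mul_const (Real.cosh t ^ n)
    refine this.congr_deriv ?_
    rw [pow_succ]
    ring

lemma Jb2_eq {x : ℝ} (hx : 0 < x) : Jb 2 x = Jb 0 x + Jb 1 x / x := by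
  set f' : ℝ → ℝ := fun t => Real.exp (-x * Real.cosh t) * Real.cosh t ^ 1
      - x * (Real.exp (-x * Real.cosh t) * Real.cosh t ^ 2)
      + x * (Real.exp (-x * Real.cosh t) * Real.cosh t ^ 0) with hf'
  have hderiv : ∀ t ∈ Ici (0:ℝ),
      HasDerivAt (fun t => Real.exp (-x * Real.cosh t) * Real.sinh t) (f' t) t := by
    intro t _
    have h1 : HasDerivAt (fun t : ℝ => -x * Real.cosh t) (-x * Real.sinh t) t :=
      (Real.hasDerivAt_cosh t).const_mul (-x)
    have h2 := (h1.exp).mul (Real.hasDerivAt_sinh t)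
    refine h2.congr_deriv ?_
    symm
    have hs : Real.sinh t ^ 2 = Real.cosh t ^ 2 - 1 := by
      linarith [Real.cosh_sq_sub_sinh_sq t]
    rw [hf']
    simp only [pow_zero, pow_one]
    linear_combination (x * Real.exp (-x * Real.cosh t)) * hs
  have hint : IntegrableOn f' (Ioi (0:ℝ)) :=
    ((integrable_Jb 1 hx).sub ((integrable_Jb 2 hx).const_mul x)).add
      ((integrable_Jb 0 hx).const_mul x)
  have htend : Tendsto (fun t => Real.exp (-x * Real.cosh t) * Real.sinh t) atTop (𝓝 0) := by
    have hup : Tendsto (fun t : ℝ => ((Nat.factorial 1 : ℝ) * (2/x)^1) * Real.exp (-(x/2) * t))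
        atTop (𝓝 0) := by
      have h1 : Tendsto (fun t : ℝ => (x/2) * t) atTop atTop :=
        Tendsto.const_mul_atTop (by positivity) tendsto_id
      have h2 : Tendsto (fun t : ℝ => Real.exp (-((x/2) * t))) atTop (𝓝 0) :=
        Real.tendsto_exp_neg_atTop_nhds_zero.comp h1
      have h3 : Tendsto (fun t : ℝ => Real.exp (-(x/2) * t)) atTop (𝓝 0) := by
        simpa [neg_mul] using h2
      simpa only [mul_zero] using h3.const_mul ((Nat.factorial 1 : ℝ) * (2/x)^1)
    apply tendsto_of_tendsto_of_tendsto_of_le_of_le' tendsto_const_nhds hup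
    · filter_upwards [eventually_ge_atTop (0:ℝ)] with t ht
      exact mul_nonneg (Real.exp_nonneg _) (Real.sinh_nonneg_iff.mpr ht)
    · filter_upwards [eventually_ge_atTop (0:ℝ)] with t ht
      calc Real.exp (-x * Real.cosh t) * Real.sinh t
          ≤ Real.exp (-x * Real.cosh t) * Real.cosh t ^ 1 := by
            simp only [pow_one]
            exact mul_le_mul_of_nonneg_left (Real.sinh_lt_cosh t).le (Real.exp_nonneg _)
        _ ≤ ((Nat.factorial 1 : ℝ) * (2/x)^1) * Real.exp (-(x/2) * t) :=
            cosh_bound 1 hx ht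
  have h0 := integral_Ioi_of_hasDerivAt_of_tendsto' hderiv hint htend
  simp only [Real.cosh_zero, Real.sinh_zero, mul_zero, sub_zero, zero_sub, neg_zero] at h0
  -- h0 : ∫ t in Ioi 0, f' t = 0
  have hI1 := integrable_Jb 1 hx
  have hI2 : IntegrableOn (fun t => x * (Real.exp (-x * Real.cosh t) * Real.cosh t ^ 2))
      (Ioi (0:ℝ)) := (integrable_Jb 2 hx).const_mul x
  have hI0 : IntegrableOn (fun t => x * (Real.exp (-x * Real.cosh t) * Real.cosh t ^ 0))
      (Ioi (0:ℝ)) := (integrable_Jb 0 hx).const_mul x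
  have hsub : IntegrableOn (fun t => Real.exp (-x * Real.cosh t) * Real.cosh t ^ 1
      - x * (Real.exp (-x * Real.cosh t) * Real.cosh t ^ 2)) (Ioi (0:ℝ)) := hI1.sub hI2
  have e1 : ∫ t in Ioi (0:ℝ), f' t
      = (∫ t in Ioi (0:ℝ), (Real.exp (-x * Real.cosh t) * Real.cosh t ^ 1
          - x * (Real.exp (-x * Real.cosh t) * Real.cosh t ^ 2)))
        + ∫ t in Ioi (0:ℝ), x * (Real.exp (-x * Real.cosh t) * Real.cosh t ^ 0) :=
    integral_add hsub hI0
  have e2 : ∫ t in Ioi (0:ℝ), (Real.exp (-x * Real.cosh t) * Real.cosh t ^ 1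
          - x * (Real.exp (-x * Real.cosh t) * Real.cosh t ^ 2))
      = (∫ t in Ioi (0:ℝ), Real.exp (-x * Real.cosh t) * Real.cosh t ^ 1)
        - ∫ t in Ioi (0:ℝ), x * (Real.exp (-x * Real.cosh t) * Real.cosh t ^ 2) :=
    integral_sub hI1 hI2
  have hsplit : ∫ t in Ioi (0:ℝ), f' t = Jb 1 x - x * Jb 2 x + x * Jb 0 x := by
    rw [e1, e2, MeasureTheory.integral_const_mul, MeasureTheory.integral_const_mul]
    rfl
  rw [hsplit] at h0
  field_simp
  linarith

lemma K0_eq_Jb : K₀ = Jb 0 := by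
  funext y; simp [K₀, Jb]


lemma K1_eq_Jb : K₁ = Jb 1 := by
  funext y; simp [K₁, Jb]


lemma hasDerivAt_K0 {x : ℝ} (hx : 0 < x) : HasDerivAt K₀ (-K₁ x) x := by
  rw [K0_eq_Jb, K1_eq_Jb]
  exact hasDerivAt_Jb 0 hx


lemma hasDerivAt_K1 {x : ℝ} (hx : 0 < x) : HasDerivAt K₁ (-K₀ x - K₁ x / x) x := by
  rw [K1_eq_Jb, K0_eq_Jb]
  have h := hasDerivAt_Jb 1 hx
  rw [Jb2_eq hx, neg_add] at h
  exact h.congr_deriv (by ring)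

lemma hasFDerivAt_cabs {z : ℂ} (hz : z ≠ 0) :
    HasFDerivAt (fun w : ℂ => ‖w‖)
      ((‖z‖)⁻¹ • (z.re • Complex.reCLM + z.im • Complex.imCLM)) z := by
  have hs : z.re * z.re + z.im * z.im ≠ 0 := by
    have h := Complex.normSq_pos.mpr hz
    rw [Complex.normSq_apply] at h
    exact h.ne'
  have h1 : HasFDerivAt (fun w : ℂ => w.re * w.re + w.im * w.im)
      ((z.re • Complex.reCLM + z.re • Complex.reCLM)
        + (z.im • Complex.imCLM + z.im • Complex.imCLM)) z :=
    (Complex.reCLM.hasFDerivAt.mul Complex.reCLM.hasFDerivAt).add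
      (Complex.imCLM.hasFDerivAt.mul Complex.imCLM.hasFDerivAt)
  have h2 := (Real.hasDerivAt_sqrt hs).comp_hasFDerivAt z h1
  have hfun : (fun w : ℂ => ‖w‖) = fun w : ℂ => Real.sqrt (w.re * w.re + w.im * w.im) := by
    funext w
    rw [Complex.norm_def, Complex.normSq_apply]
  rw [hfun]
  refine h2.congr_fderiv ?_
  symm
  have hralt : Real.sqrt (z.re * z.re + z.im * z.im) = ‖z‖ := by
    rw [Complex.norm_def, Complex.normSq_apply]
  have hrpos : 0 < ‖z‖ := norm_pos_iff.mpr hz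
  ext u
  simp only [ContinuousLinearMap.smul_apply, ContinuousLinearMap.add_apply,
    Complex.reCLM_apply, Complex.imCLM_apply, smul_eq_mul, hralt]
  field_simp
  ring

theorem massive_cauchy_kernel_dirac (m : ℝ) (hm : 0 < m) :
    ∀ z : ℂ, z ≠ 0 →
      dbar (fun w => ((starRingEnd ℂ) w / (‖w‖ : ℂ)) * (K₁ (2 * m * ‖w‖) : ℂ)
          + Complex.I * (K₀ (2 * m * ‖w‖) : ℂ)) z
        + Complex.I * m * (starRingEnd ℂ)
            (((starRingEnd ℂ) z / (‖z‖ : ℂ)) * (K₁ (2 * m * ‖z‖) : ℂ)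
              + Complex.I * (K₀ (2 * m * ‖z‖) : ℂ)) = 0 := by
  intro z hz
  have hfun : (fun w => ((starRingEnd ℂ) w / (‖w‖ : ℂ)) * (K₁ (2 * m * ‖w‖) : ℂ)
        + Complex.I * (K₀ (2 * m * ‖w‖) : ℂ))
      = fun w => (starRingEnd ℂ) w * ((K₁ (2 * m * ‖w‖) / ‖w‖ : ℝ) : ℂ)
        + Complex.I * ((K₀ (2 * m * ‖w‖) : ℝ) : ℂ) := by
    funext w
    push_cast
    ring
  rw [hfun]
  set r : ℝ := ‖z‖ with hrdef
  have hr : 0 < r := norm_pos_iff.mpr hz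
  have hmr : 0 < 2 * m * r := by positivity
  set a : ℝ := K₁ (2 * m * r) with hadef
  set b : ℝ := K₀ (2 * m * r) with hbdef
  -- scalar derivatives
  have hlin : HasDerivAt (fun s : ℝ => 2 * m * s) (2 * m) r := by
    simpa using (hasDerivAt_id r).const_mul (2 * m)
  have hK1c : HasDerivAt (fun s : ℝ => K₁ (2 * m * s)) ((-b - a / (2 * m * r)) * (2 * m)) r :=
    (hasDerivAt_K1 hmr).comp r hlin
  have hK0c : HasDerivAt (fun s : ℝ => K₀ (2 * m * s)) ((-a) * (2 * m)) r :=
    (hasDerivAt_K0 hmr).comp r hlin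
  have hg1 : HasDerivAt (fun s : ℝ => K₁ (2 * m * s) / s)
      (((-b - a / (2 * m * r)) * (2 * m) * r - a * 1) / r ^ 2) r :=
    hK1c.div (hasDerivAt_id r) hr.ne'
  -- fderivs
  set Lr : ℂ →L[ℝ] ℝ := (r⁻¹ • (z.re • Complex.reCLM + z.im • Complex.imCLM)) with hLr
  have habs : HasFDerivAt (fun w : ℂ => ‖w‖) Lr z := hasFDerivAt_cabs hz
  have hg1z : HasFDerivAt (fun w : ℂ => K₁ (2 * m * ‖w‖) / ‖w‖)
      ((((-b - a / (2 * m * r)) * (2 * m) * r - a * 1) / r ^ 2) • Lr) z :=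
    by have := hg1.comp_hasFDerivAt z habs; exact this
  have hg2z : HasFDerivAt (fun w : ℂ => K₀ (2 * m * ‖w‖))
      (((-a) * (2 * m)) • Lr) z :=
    by have := hK0c.comp_hasFDerivAt z habs; exact this
  have hg1c : HasFDerivAt (fun w : ℂ => ((K₁ (2 * m * ‖w‖) / ‖w‖ : ℝ) : ℂ))
      (Complex.ofRealCLM.comp ((((-b - a / (2 * m * r)) * (2 * m) * r - a * 1) / r ^ 2) • Lr)) z :=
    Complex.ofRealCLM.hasFDerivAt.comp z hg1z
  have hg2c : HasFDerivAt (fun w : ℂ => ((K₀ (2 * m * ‖w‖) : ℝ) : ℂ))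
      (Complex.ofRealCLM.comp (((-a) * (2 * m)) • Lr)) z :=
    Complex.ofRealCLM.hasFDerivAt.comp z hg2z
  have hconj : HasFDerivAt (fun w : ℂ => (starRingEnd ℂ) w)
      (Complex.conjCLE.toContinuousLinearMap) z := Complex.conjCLE.hasFDerivAt
  have hprod := hconj.mul hg1c
  have hIpart := hg2c.const_mul Complex.I
  have htot : HasFDerivAt (fun w => (starRingEnd ℂ) w * ((K₁ (2 * m * ‖w‖) / ‖w‖ : ℝ) : ℂ)
      + Complex.I * ((K₀ (2 * m * ‖w‖) : ℝ) : ℂ)) _ z := hprod.add hIpart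
  rw [dbar, htot.fderiv]
  simp only [ContinuousLinearMap.add_apply, ContinuousLinearMap.smul_apply,
    ContinuousLinearMap.comp_apply, Complex.ofRealCLM_apply, Complex.reCLM_apply,
    Complex.imCLM_apply, ContinuousLinearEquiv.coe_coe, Complex.conjCLE_apply,
    smul_eq_mul, Complex.real_smul, Complex.one_re, Complex.one_im, Complex.I_re,
    Complex.I_im, map_one, Complex.conj_I]
  have hLr1 : Lr 1 = r⁻¹ * z.re := by
    simp [hLr]
  have hLrI : Lr Complex.I = r⁻¹ * z.im := by
    simp [hLr]
  rw [hLr1, hLrI, ← hrdef, ← hadef]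
  have hD : ((-b - a / (2 * m * r)) * (2 * m) * r - a * 1) / r ^ 2
      = (-(2*m*b*r) - 2*a) / r ^ 2 := by
    field_simp
    ring
  rw [hD]
  simp only [map_add, map_mul, map_div₀, Complex.conj_conj, Complex.conj_ofReal,
    Complex.conj_I]
  have hC : (starRingEnd ℂ) z = (z.re : ℂ) - (z.im : ℂ) * Complex.I := by
    simp [Complex.ext_iff]
  have hZ : z = (z.re : ℂ) + (z.im : ℂ) * Complex.I := (Complex.re_add_im z).symm
  have hR2 : (z.re : ℂ)^2 + (z.im : ℂ)^2 = (r : ℂ)^2 := by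
    have h : z.re ^ 2 + z.im ^ 2 = r ^ 2 := by
      rw [hrdef, Complex.sq_norm, Complex.normSq_apply]; ring
    exact_mod_cast h
  have hRne : (r : ℂ) ≠ 0 := Complex.ofReal_ne_zero.mpr hr.ne'
  have hMne : (m : ℂ) ≠ 0 := Complex.ofReal_ne_zero.mpr hm.ne'
  push_cast
  field_simp
  have hdne : ((r:ℂ) ^ 2 * ↑r * ↑r * ↑r * 2) ≠ 0 :=
    mul_ne_zero (mul_ne_zero (mul_ne_zero (mul_ne_zero (pow_ne_zero 2 hRne) hRne) hRne) hRne)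
      two_ne_zero
  linear_combination
    (2*(-((m:ℂ)*(b:ℂ)*(r:ℂ)) - (a:ℂ))*((z.re:ℂ) + Complex.I*(z.im:ℂ))) * hC
    + (2*(m:ℂ)*(r:ℂ)^2*(a:ℂ)*Complex.I) * hZ
    + (2*(-((m:ℂ)*(b:ℂ)*(r:ℂ)) - (a:ℂ))) * hR2
    + (-(r:ℂ)^2*(a:ℂ) - 2*(m:ℂ)*(b:ℂ)*(r:ℂ)^3
        - 2*(-((m:ℂ)*(b:ℂ)*(r:ℂ)) - (a:ℂ))*(z.im:ℂ)^2) * Complex.I_sq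
end
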